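/- Under the monotonicity hypotheses, the quantized conservative update is total-variation diminishing on the periodic grid: if φ⁺ is monotone nondecreasing, φ⁻ is monotone nonincreasing, and the map s ↦ s - φ⁺(s) + φ⁻(s) is monotone nondecreasing on ℤ, then for every state q : Fin N → ℤ, ∑ i, |(T q) (i+1) - (T q) i| ≤ ∑ i, |q (i+1) - q i|, with indices taken cyclically. -/

import Mathlib

/-- Interface transfer on the periodic grid `Fin N`. -/
def transfer {N : ℕ} [NeZero N] (φp φm : ℤ → ℤ) (q : Fin N → ℤ) (i : Fin N) : ℤ :=
  φp (q i) + φm (q (i + 1))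

/-- Quantized conservative update on the periodic grid `Fin N`. -/
def update {N : ℕ} [NeZero N] (φp φm : ℤ → ℤ) (q : Fin N → ℤ) (i : Fin N) : ℤ :=
  q i - (transfer φp φm q i - transfer φp φm q (i - 1))

private lemma split_abs (φp φm : ℤ → ℤ) (hp : Monotone φp) (hm : Antitone φm)
    (hmix : Monotone fun s : ℤ => s - φp s + φm s) (x y : ℤ) :
    |(y - φp y + φm y) - (x - φp x + φm x)| + |φp y - φp x| + |φm x - φm y| = |y - x| := by
  rcases le_total x y with h | h
  · have h1 := hp h
    have h2 := hm h
    have h3 := hmix h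
    simp only at h3
    rw [abs_of_nonneg (by omega : (0:ℤ) ≤ (y - φp y + φm y) - (x - φp x + φm x)),
        abs_of_nonneg (by omega : (0:ℤ) ≤ φp y - φp x),
        abs_of_nonneg (by omega : (0:ℤ) ≤ φm x - φm y),
        abs_of_nonneg (by omega : (0:ℤ) ≤ y - x)]
    ring
  · have h1 := hp h
    have h2 := hm h
    have h3 := hmix h
    simp only at h3
    rw [abs_of_nonpos (by omega : (y - φp y + φm y) - (x - φp x + φm x) ≤ 0),
        abs_of_nonpos (by omega : φp y - φp x ≤ 0),
        abs_of_nonpos (by omega : φm x - φm y ≤ 0),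
        abs_of_nonpos (by omega : y - x ≤ 0)]
    ring

/-- Under the monotonicity hypotheses, the update is total-variation diminishing
on the periodic grid. -/
theorem update_tvd {N : ℕ} [NeZero N] (φp φm : ℤ → ℤ)
    (hp : Monotone φp) (hm : Antitone φm)
    (hmix : Monotone fun s : ℤ => s - φp s + φm s)
    (q : Fin N → ℤ) :
    ∑ i, |update φp φm q (i + 1) - update φp φm q i| ≤ ∑ i, |q (i + 1) - q i| := by
  set A : Fin N → ℤ := fun i =>
    |(q (i+1) - φp (q (i+1)) + φm (q (i+1))) - (q i - φp (q i) + φm (q i))| with hA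
  set B : Fin N → ℤ := fun i => |φp (q (i+1)) - φp (q i)| with hB
  set C : Fin N → ℤ := fun i => |φm (q i) - φm (q (i+1))| with hC
  have key : ∀ i : Fin N,
      |update φp φm q (i+1) - update φp φm q i| ≤ A i + B (i-1) + C (i+1) := by
    intro i
    have h1 : update φp φm q (i+1) - update φp φm q i =
        ((q (i+1) - φp (q (i+1)) + φm (q (i+1))) - (q i - φp (q i) + φm (q i)))
        + (φp (q i) - φp (q (i-1))) + (φm (q (i+1)) - φm (q (i+1+1))) := by
      simp only [update, transfer]
      have e1 : i + 1 - 1 = i := add_sub_cancel_right i 1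
      rw [e1, sub_add_cancel]
      ring_nf
    rw [h1]
    have h2 : B (i-1) = |φp (q i) - φp (q (i-1))| := by
      simp only [hB, sub_add_cancel]
    have h3 : C (i+1) = |φm (q (i+1)) - φm (q (i+1+1))| := by
      simp only [hC]
    rw [h2, h3]
    exact abs_add_three _ _ _
  calc ∑ i, |update φp φm q (i+1) - update φp φm q i|
      ≤ ∑ i, (A i + B (i-1) + C (i+1)) := Finset.sum_le_sum fun i _ => key i
    _ = ∑ i, A i + ∑ i, B (i-1) + ∑ i, C (i+1) := by
        rw [Finset.sum_add_distrib, Finset.sum_add_distrib]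
    _ = ∑ i, A i + ∑ i, B i + ∑ i, C i := by
        congr 1
        · congr 1
          exact Fintype.sum_equiv (Equiv.subRight (1 : Fin N)) _ _ (fun i => rfl)
        · exact Fintype.sum_equiv (Equiv.addRight (1 : Fin N)) _ _ (fun i => rfl)
    _ = ∑ i, (A i + B i + C i) := by
        rw [Finset.sum_add_distrib, Finset.sum_add_distrib]
    _ = ∑ i, |q (i+1) - q i| := by
        refine Finset.sum_congr rfl fun i _ => ?_
        exact split_abs φp φm hp hm hmix (q i) (q (i+1))
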